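/- Let f̃_c(ζ) = e^{-c/2}·√(ζ² − (e^c − 1)) be the half-plane slit map (with the branch of square root given by arg : ℂ \ [0,∞) → (0,2π)). Then for λ ∈ ℂ small, |f̃_c(±√(e^c−1) + λ)| = √2·e^{-c/2}·(e^c − 1)^{1/4}·|λ|^{1/2}·(1 + O(|λ|/c^{1/2})). -/

import Mathlib

open Complex Real

/-- The argument of a complex number taken in `(0, 2π)` (for `w ∉ [0,∞)`). -/
noncomputable def argPos (w : ℂ) : ℝ :=
  if Complex.arg w ≤ 0 then Complex.arg w + 2 * π else Complex.arg w

/-- The branch of the square root with `arg : ℂ \ [0,∞) → (0, 2π)`. -/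
noncomputable def sqrtBranch (w : ℂ) : ℂ :=
  (Real.sqrt (‖w‖) : ℂ) * Complex.exp (Complex.I * ((argPos w / 2 : ℝ) : ℂ))

/-- The half-plane slit map `f̃_c(ζ) = e^{-c/2}·√(ζ² − (e^c − 1))`. -/
noncomputable def halfPlaneSlit (c : ℝ) (ζ : ℂ) : ℂ :=
  (Real.exp (-c / 2) : ℂ) * sqrtBranch (ζ ^ 2 - ((Real.exp c - 1 : ℝ) : ℂ))

lemma abs_sqrtBranch (w : ℂ) : ‖sqrtBranch w‖ = Real.sqrt ‖w‖ := by
  unfold sqrtBranch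
  rw [norm_mul, Complex.norm_real, Real.norm_of_nonneg (Real.sqrt_nonneg _), Complex.norm_exp]
  simp

lemma aux_sqrt (t : ℝ) (ht : 0 ≤ t) : |Real.sqrt t - 1| ≤ |t - 1| := by
  have h := Real.sq_sqrt ht
  have h0 := Real.sqrt_nonneg t
  rcases abs_cases (Real.sqrt t - 1) with ⟨h1, _⟩ | ⟨h1, _⟩ <;>
    rcases abs_cases (t - 1) with ⟨h2, _⟩ | ⟨h2, _⟩ <;> nlinarith

/-- For `λ` small,
`|f̃_c(±√(e^c−1) + λ)| = √2·e^{-c/2}·(e^c − 1)^{1/4}·|λ|^{1/2}·(1 + O(|λ|/c^{1/2}))`. -/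
theorem halfPlaneSlit_local_behaviour :
    ∃ C > (0:ℝ), ∀ c : ℝ, 0 < c → c < 1 → ∀ s : ℝ, (s = 1 ∨ s = -1) →
      ∀ lam : ℂ, lam ≠ 0 → ‖lam‖ ≤ Real.sqrt c / C →
        ∃ e : ℝ, |e| ≤ C * ‖lam‖ / Real.sqrt c ∧
          ‖halfPlaneSlit c ((s * Real.sqrt (Real.exp c - 1) : ℝ) + lam)‖
            = Real.sqrt 2 * Real.exp (-c / 2) * (Real.exp c - 1) ^ ((1:ℝ)/4) *
                ‖lam‖ ^ ((1:ℝ)/2) * (1 + e) := by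
  refine ⟨1, one_pos, ?_⟩
  intro c hc _ s hs lam hlam _
  set b := Real.sqrt (Real.exp c - 1) with hbdef
  have hec : (0:ℝ) < Real.exp c - 1 := by nlinarith [Real.add_one_le_exp c]
  have hb : 0 < b := Real.sqrt_pos.mpr hec
  have hb2 : b ^ 2 = Real.exp c - 1 := Real.sq_sqrt hec.le
  set A := ‖lam + 2 * ((s * b : ℝ) : ℂ)‖ with hA
  have hA0 : 0 ≤ A := norm_nonneg _
  have hfac : (((s * b : ℝ) : ℂ) + lam) ^ 2 - ((Real.exp c - 1 : ℝ) : ℂ)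
      = lam * (lam + 2 * ((s * b : ℝ) : ℂ)) := by
    rw [← hb2]; rcases hs with h | h <;> subst h <;> push_cast <;> ring
  have habs2b : ‖2 * ((s * b : ℝ) : ℂ)‖ = 2 * b := by
    rcases hs with h | h <;> subst h <;>
      simp [norm_mul, Complex.norm_real, abs_mul, _root_.abs_of_pos hb]
  have hAb : |A - 2 * b| ≤ ‖lam‖ := by
    have h := abs_norm_sub_norm_le (lam + 2 * ((s * b : ℝ) : ℂ))
      (2 * ((s * b : ℝ) : ℂ))
    rw [add_sub_cancel_right, habs2b] at h
    exact h
  refine ⟨Real.sqrt A / Real.sqrt (2 * b) - 1, ?_, ?_⟩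
  · -- bound
    have h2b : (0:ℝ) < 2 * b := by linarith
    have hdiv : Real.sqrt A / Real.sqrt (2 * b) = Real.sqrt (A / (2 * b)) :=
      (Real.sqrt_div hA0 _).symm
    rw [hdiv]
    have h1 : |Real.sqrt (A / (2 * b)) - 1| ≤ |A / (2 * b) - 1| :=
      aux_sqrt _ (div_nonneg hA0 h2b.le)
    have h2 : A / (2 * b) - 1 = (A - 2 * b) / (2 * b) := by field_simp
    have h3 : |(A - 2 * b) / (2 * b)| = |A - 2 * b| / (2 * b) := by
      rw [abs_div, _root_.abs_of_pos h2b]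
    have hsc : Real.sqrt c ≤ 2 * b := by
      have : Real.sqrt c ≤ b := Real.sqrt_le_sqrt (by nlinarith [Real.add_one_le_exp c])
      linarith
    have hscpos : 0 < Real.sqrt c := Real.sqrt_pos.mpr hc
    calc |Real.sqrt (A / (2 * b)) - 1| ≤ |A - 2 * b| / (2 * b) := by rw [← h3, ← h2]; exact h1
      _ ≤ ‖lam‖ / Real.sqrt c := by gcongr
      _ = 1 * ‖lam‖ / Real.sqrt c := by ring
  · -- equation
    have hLHS : ‖halfPlaneSlit c (((s * b : ℝ) : ℂ) + lam)‖
        = Real.exp (-c / 2) * (Real.sqrt ‖lam‖ * Real.sqrt A) := by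
      unfold halfPlaneSlit
      rw [norm_mul, Complex.norm_real, Real.norm_of_nonneg (Real.exp_pos _).le, abs_sqrtBranch,
        hfac, norm_mul, Real.sqrt_mul (norm_nonneg _)]
    rw [hLHS]
    have h14 : (Real.exp c - 1) ^ ((1:ℝ)/4) = Real.sqrt b := by
      rw [← hb2, ← Real.rpow_natCast b 2, ← Real.rpow_mul hb.le, Real.sqrt_eq_rpow]
      norm_num
    have h12 : ‖lam‖ ^ ((1:ℝ)/2) = Real.sqrt ‖lam‖ := by
      rw [Real.sqrt_eq_rpow]
    have hs2b : Real.sqrt (2 * b) = Real.sqrt 2 * Real.sqrt b :=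
      Real.sqrt_mul (by norm_num) b
    have h2ne : Real.sqrt 2 ≠ 0 := by positivity
    have hbne : Real.sqrt b ≠ 0 := by positivity
    rw [h14, h12, hs2b]
    field_simp
    ring
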